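/- If α is an automorphism of the free group F_n sending each generator x_i of a fixed free basis X to a palindrome on X, then for each i the palindrome α(x_i) has odd length; in particular α(x_i) = w^rev · σ(x_i)^{ε_i} · w for some word w on X^{±1}, a permutation σ of X, and ε_i ∈ {±1}. -/

import Mathlib

/-- An element of a free group is a palindrome if its reduced word reads the
same backwards as forwards. -/
def IsPalindrome {n : ℕ} (g : FreeGroup (Fin n)) : Prop :=
  g.toWord.reverse = g.toWord

/-- The "reverse" of an element of a free group: the element whose reduced word
is the reverse of the reduced word of `g`. -/
def wordReverse {n : ℕ} (g : FreeGroup (Fin n)) : FreeGroup (Fin n) :=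
  FreeGroup.mk g.toWord.reverse

namespace PalAux

open FreeGroup List

variable {n : ℕ}

lemma odd_pos' {k : ℕ} (h : Odd k) : 0 < k := by obtain ⟨m, hm⟩ := h; omega

/-- The no-cancellation relation on adjacent letters. -/
def R {n : ℕ} (a b : Fin n × Bool) : Prop := ¬(a.1 = b.1 ∧ a.2 = !b.2)

lemma R_symm {a b : Fin n × Bool} (h : R a b) : R b a := by
  rintro ⟨h1, h2⟩
  exact h ⟨h1.symm, by rw [h2, Bool.not_not]⟩

lemma reduce_eq_of_chain' : ∀ {L : List (Fin n × Bool)}, List.Chain' R L →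
    FreeGroup.reduce L = L := by
  intro L
  induction L with
  | nil => intro _; rfl
  | cons x L ih =>
    intro h
    rw [FreeGroup.reduce.cons, ih h.tail]
    cases L with
    | nil => rfl
    | cons hd tl =>
      have hR : R x hd := (List.isChain_cons_cons.mp h).1
      show (if x.1 = hd.1 ∧ x.2 = !hd.2 then tl else x :: hd :: tl) = x :: hd :: tl
      rw [if_neg hR]

lemma chain'_of_reduce_eq : ∀ {L : List (Fin n × Bool)}, FreeGroup.reduce L = L →
    List.Chain' R L := by
  intro L
  induction L with
  | nil => intro _; exact List.isChain_nil
  | cons x L ih =>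
    intro h
    rw [FreeGroup.reduce.cons] at h
    have hred : FreeGroup.Red L (FreeGroup.reduce L) := FreeGroup.reduce.red
    have hlen : (FreeGroup.reduce L).length ≤ L.length := FreeGroup.Red.length_le hred
    cases hL : FreeGroup.reduce L with
    | nil =>
      rw [hL] at h
      change [x] = x :: L at h
      have hLnil : L = [] := ((List.cons.inj h).2).symm
      subst hLnil
      exact List.isChain_singleton x
    | cons hd tl =>
      rw [hL] at h hlen
      change (if x.1 = hd.1 ∧ x.2 = !hd.2 then tl else x :: hd :: tl) = x :: L at h
      by_cases hg : x.1 = hd.1 ∧ x.2 = !hd.2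
      · rw [if_pos hg] at h
        exfalso
        have h1 : tl.length = L.length + 1 := by rw [h]; simp
        simp at hlen
        omega
      · rw [if_neg hg] at h
        have hL' : L = hd :: tl := by
          have := congrArg List.tail h
          simpa using this.symm
        have hLred : FreeGroup.reduce L = L := by rw [hL, hL']
        subst hL'
        exact List.isChain_cons_cons.mpr ⟨hg, ih hLred⟩

lemma toWord_mk_of_chain' {L : List (Fin n × Bool)} (h : List.Chain' R L) :
    (FreeGroup.mk L).toWord = L := by
  rw [FreeGroup.toWord_mk, reduce_eq_of_chain' h]

/-- The mod 2 abelianization. -/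
def φ {n : ℕ} : FreeGroup (Fin n) →* Multiplicative (Fin n → ZMod 2) :=
  FreeGroup.lift fun i => Multiplicative.ofAdd (Pi.single (M := fun _ => ZMod 2) i 1)

/-- The letter-sum of a word at mod-2 level. -/
def lsum {n : ℕ} (L : List (Fin n × Bool)) : Fin n → ZMod 2 :=
  (L.map fun p => Pi.single (M := fun _ => ZMod 2) p.1 1).sum

lemma phi_mk (L : List (Fin n × Bool)) :
    φ (FreeGroup.mk L) = Multiplicative.ofAdd (lsum L) := by
  show FreeGroup.lift _ (FreeGroup.mk L) = _
  rw [FreeGroup.lift_mk]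
  induction L with
  | nil => simp [lsum]
  | cons p L ih =>
    have hneg : -(Pi.single (M := fun _ => ZMod 2) p.1 1) =
        Pi.single (M := fun _ => ZMod 2) p.1 1 := by
      ext j
      rw [Pi.neg_apply, Pi.single_apply]
      split_ifs
      · show (-1 : ZMod 2) = 1; decide
      · exact neg_zero
    have hterm : (cond p.2 (Multiplicative.ofAdd (Pi.single (M := fun _ => ZMod 2) p.1 1))
        (Multiplicative.ofAdd (Pi.single (M := fun _ => ZMod 2) p.1 1))⁻¹)
        = Multiplicative.ofAdd (Pi.single (M := fun _ => ZMod 2) p.1 1) := by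
      cases p.2
      · show (Multiplicative.ofAdd _)⁻¹ = _
        rw [← ofAdd_neg, hneg]
      · rfl
    simp only [List.map_cons, List.prod_cons, hterm, ih, lsum, List.map_cons, List.sum_cons,
      ← ofAdd_add]

lemma phi_eq (g : FreeGroup (Fin n)) :
    φ g = Multiplicative.ofAdd (lsum g.toWord) := by
  conv_lhs => rw [← FreeGroup.mk_toWord (x := g)]
  exact phi_mk _

lemma add_self_zero (v : Fin n → ZMod 2) : v + v = 0 := by
  ext i
  have : ∀ x : ZMod 2, x + x = 0 := by decide
  exact this (v i)

lemma lsum_even {L : List (Fin n × Bool)} {m : ℕ} (hp : L.reverse = L)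
    (hl : L.length = 2 * m) : lsum L = 0 := by
  have hlm : L.length - m = m := by omega
  have hsplit : L = L.take m ++ (L.take m).reverse := by
    conv_lhs => rw [← List.take_append_drop m L]
    congr 1
    conv_lhs => rw [← hp]
    rw [List.drop_reverse, hlm]
  rw [lsum]
  conv_lhs => rw [hsplit]
  rw [List.map_append, List.sum_append, List.map_reverse, List.sum_reverse]
  exact add_self_zero _

lemma lsum_odd {L : List (Fin n × Bool)} {m : ℕ} (hm : m < L.length)
    (hp : L.reverse = L) (hl : L.length = 2 * m + 1) :
    lsum L = Pi.single (L.get ⟨m, hm⟩).1 1 := by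
  have hlm : L.length - (m + 1) = m := by omega
  have hdrop : L.drop (m + 1) = (L.take m).reverse := by
    conv_lhs => rw [← hp]
    rw [List.drop_reverse, hlm]
  have hsplit : L = L.take m ++ L[m] :: L.drop (m + 1) := by
    conv_lhs => rw [← List.take_append_drop m L]
    congr 1
    exact List.drop_eq_getElem_cons hm
  rw [lsum]
  conv_lhs => rw [hsplit]
  rw [List.map_append, List.sum_append, List.map_cons, List.sum_cons, hdrop,
    List.map_reverse, List.sum_reverse]
  have habel : ∀ a c : Fin n → ZMod 2, a + (c + a) = (a + a) + c := fun a c => by abel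
  rw [habel, add_self_zero, zero_add]
  rfl

end PalAux

open PalAux FreeGroup List in
/-- If `α ∈ Aut(F_n)` sends each generator to a palindrome, then each `α(x_i)`
has odd (reduced) length, and `α(x_i) = w^rev · σ(x_i)^{ε_i} · w` for some word
`w`, a permutation `σ` of the basis, and `ε_i ∈ {±1}`. -/
theorem palindromic_automorphism_odd_form {n : ℕ}
    (α : MulAut (FreeGroup (Fin n)))
    (hα : ∀ i : Fin n, IsPalindrome (α (FreeGroup.of i))) :
    (∀ i : Fin n, Odd (α (FreeGroup.of i)).toWord.length) ∧
    ∃ σ : Equiv.Perm (Fin n), ∀ i : Fin n, ∃ (w : FreeGroup (Fin n)) (ε : ℤ),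
      (ε = 1 ∨ ε = -1) ∧
      α (FreeGroup.of i) = wordReverse w * (FreeGroup.of (σ i)) ^ ε * w := by
  classical
  set L : Fin n → List (Fin n × Bool) := fun j => (α (FreeGroup.of j)).toWord with hL
  have hpal : ∀ j, (L j).reverse = L j := fun j => hα j
  have hchain : ∀ j, List.Chain' R (L j) := fun j =>
    chain'_of_reduce_eq (FreeGroup.reduce_toWord _)
  -- the candidate permutation
  set f0 : Fin n → Fin n := fun j =>
    if h : Odd (L j).length then
      ((L j).get ⟨(L j).length / 2, Nat.div_lt_self (odd_pos' h) one_lt_two⟩).1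
    else j with hf0
  have hf0odd : ∀ j (h : Odd (L j).length), f0 j =
      ((L j).get ⟨(L j).length / 2, Nat.div_lt_self (odd_pos' h) one_lt_two⟩).1 := by
    intro j h
    rw [hf0]
    simp only [dif_pos h]
  have hf0even : ∀ j, ¬ Odd (L j).length → f0 j = j := by
    intro j h
    rw [hf0]
    simp only [dif_neg h]
  -- key surjectivity statement
  have key : ∀ k : Fin n, ∃ j, Odd (L j).length ∧ f0 j = k := by
    intro k
    have hex : ∃ j, lsum (L j) k ≠ 0 := by
      by_contra hc
      push_neg at hc
      set χ : FreeGroup (Fin n) →* Multiplicative (ZMod 2) :=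
        (AddMonoidHom.toMultiplicative (Pi.evalAddMonoidHom (fun _ : Fin n => ZMod 2) k)).comp
          (φ.comp α.toMonoidHom) with hχ
      have hχval : ∀ g : FreeGroup (Fin n),
          χ g = Multiplicative.ofAdd (lsum (α g).toWord k) := by
        intro g
        simp only [hχ, MonoidHom.comp_apply, MulEquiv.coe_toMonoidHom, phi_eq]
        rfl
      have h1 : χ = 1 := by
        apply FreeGroup.ext_hom
        intro a
        rw [hχval, hc a]
        rfl
      have h2 := hχval (α.symm (FreeGroup.of k))
      rw [h1, MulEquiv.apply_symm_apply] at h2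
      simp only [MonoidHom.one_apply] at h2
      have h3 : lsum (FreeGroup.of k).toWord k = 0 := by
        have := congrArg Multiplicative.toAdd h2
        simpa using this.symm
      rw [FreeGroup.toWord_of] at h3
      simp [lsum, Pi.single_apply] at h3
    obtain ⟨j, hj⟩ := hex
    have hodd : Odd (L j).length := by
      by_contra he
      rw [Nat.not_odd_iff_even] at he
      obtain ⟨m, hm⟩ := he
      have : lsum (L j) = 0 := lsum_even (m := m) (hpal j) (by omega)
      rw [this] at hj
      exact hj rfl
    obtain ⟨m, hm⟩ := hodd
    have hmlt : m < (L j).length := by omega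
    have hv := lsum_odd hmlt (hpal j) hm
    have hck : ((L j).get ⟨m, hmlt⟩).1 = k := by
      rw [hv, Pi.single_apply] at hj
      by_contra hne
      rw [if_neg (fun h => hne h.symm)] at hj
      exact hj rfl
    refine ⟨j, ⟨m, hm⟩, ?_⟩
    rw [hf0odd j ⟨m, hm⟩, ← hck]
    simp only [show (L j).length / 2 = m from by omega]
  have hsurj : Function.Surjective f0 := fun k => (key k).imp fun j hj => hj.2
  have hbij : Function.Bijective f0 := Finite.surjective_iff_bijective.mp hsurj
  have hodd_all : ∀ j, Odd (L j).length := by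
    intro j0
    by_contra he
    obtain ⟨j, hjodd, hjeq⟩ := key j0
    have hne : j ≠ j0 := fun h => he (h ▸ hjodd)
    exact hne (hbij.injective (hjeq.trans (hf0even j0 he).symm))
  refine ⟨hodd_all, ⟨Equiv.ofBijective f0 hbij, ?_⟩⟩
  intro i
  obtain ⟨m, hm⟩ := hodd_all i
  have hmlen : m < (L i).length := by omega
  set c : Fin n × Bool := (L i).get ⟨m, hmlen⟩ with hc
  set u : List (Fin n × Bool) := (L i).take m with hu
  set d : List (Fin n × Bool) := (L i).drop (m + 1) with hd
  have hlm : (L i).length - (m + 1) = m := by omega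
  have hdu : d = u.reverse := by
    rw [hd, hu]
    conv_lhs => rw [← hpal i]
    rw [List.drop_reverse, hlm]
  have hsplit : L i = u ++ c :: d := by
    rw [hu, hd, hc]
    conv_lhs => rw [← List.take_append_drop m (L i)]
    congr 1
    exact List.drop_eq_getElem_cons hmlen
  have hchd : List.Chain' R d := by rw [hd]; exact (hchain i).drop _
  refine ⟨FreeGroup.mk d, if c.2 then 1 else -1, by by_cases h : c.2 <;> simp [h], ?_⟩
  have hwrev : wordReverse (FreeGroup.mk d) = FreeGroup.mk u := by
    rw [wordReverse, toWord_mk_of_chain' hchd, hdu, List.reverse_reverse]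
  have hσ : (Equiv.ofBijective f0 hbij) i = c.1 := by
    show f0 i = c.1
    rw [hf0odd i ⟨m, hm⟩, hc]
    simp only [show (L i).length / 2 = m from by omega]
  have hpow : (FreeGroup.of ((Equiv.ofBijective f0 hbij) i)) ^ (if c.2 then (1:ℤ) else -1)
      = FreeGroup.mk [c] := by
    rw [hσ]
    cases hb : c.2
    · rw [if_neg (by simp), zpow_neg_one]
      have hof : FreeGroup.of c.1 = FreeGroup.mk [(c.1, true)] := rfl
      rw [hof, FreeGroup.inv_mk]
      have hinv : FreeGroup.invRev [(c.1, true)] = [(c.1, false)] := by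
        simp [FreeGroup.invRev]
      rw [hinv]
      congr 1
      rw [← hb]
    · rw [if_pos rfl, zpow_one]
      have hceq : c = (c.1, true) := by rw [← hb]
      rw [hceq]
      rfl
  rw [hwrev, hpow]
  have hmk : α (FreeGroup.of i) = FreeGroup.mk (L i) := (FreeGroup.mk_toWord).symm
  rw [hmk, FreeGroup.mul_mk, FreeGroup.mul_mk, hsplit]
  simp
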